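/- Let X be a real random variable with an even, log-concave density. Then E(X⁴) ≤ 6 (E(X²))². -/

import Mathlib

open MeasureTheory Set
open scoped ENNReal

lemma rpow_split {x : ℝ} (hx : 0 ≤ x) (l : ℝ) : x ^ l * x ^ (1 - l) = x := by
  rcases hx.eq_or_lt with h0 | hpos
  · subst h0
    by_cases hl : l = 0
    · simp [hl]
    · rw [Real.zero_rpow hl, zero_mul]
  · rw [← Real.rpow_add hpos]; simp

lemma key_pt (h : ℝ → ℝ) (hnn : ∀ t, 0 ≤ h t)
    (hlc : ∀ x y t : ℝ, 0 ≤ t → t ≤ 1 →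
      h x ^ t * h y ^ (1 - t) ≤ h (t * x + (1 - t) * y))
    (a b t : ℝ) (ht : 0 ≤ t) (hab : a + t ≤ b) :
    h a * h b ≤ h (a + t) * h (b - t) := by
  set d := b - a with hd
  have hdt : t ≤ d := by simp only [hd]; linarith
  have hd0 : 0 ≤ d := le_trans ht hdt
  rcases hd0.eq_or_lt with hzero | hdpos
  · have ht0 : t = 0 := le_antisymm (hzero ▸ hdt) ht
    have hba : b = a := by simp only [hd] at hzero; linarith
    simp [ht0, hba]
  · set l := (d - t) / d with hl
    have hdne : d ≠ 0 := ne_of_gt hdpos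
    have hl0 : 0 ≤ l := div_nonneg (by linarith) hd0
    have hl1 : l ≤ 1 := div_le_one_of_le₀ (by linarith) hd0
    have e1 : l * a + (1 - l) * b = a + t := by
      field_simp [hl]
      ring_nf
      rw [hl]; field_simp; ring
    have e2 : (1 - l) * a + (1 - (1 - l)) * b = b - t := by
      field_simp [hl]
      ring_nf
      rw [hl]; field_simp; ring
    have i1 := hlc a b l hl0 hl1
    rw [e1] at i1
    have i2 := hlc a b (1 - l) (by linarith) (by linarith)
    rw [e2] at i2
    have hsub : (1:ℝ) - (1 - l) = l := by ring
    have lhs_eq : h a * h b = (h a ^ l * h b ^ (1 - l)) * (h a ^ (1 - l) * h b ^ (1 - (1 - l))) := by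
      rw [hsub]
      rw [show (h a ^ l * h b ^ (1 - l)) * (h a ^ (1 - l) * h b ^ l)
          = (h a ^ l * h a ^ (1 - l)) * (h b ^ l * h b ^ (1 - l)) by ring]
      rw [rpow_split (hnn a), rpow_split (hnn b)]
    rw [lhs_eq]
    exact mul_le_mul i1 i2
      (mul_nonneg (Real.rpow_nonneg (hnn a) _) (Real.rpow_nonneg (hnn b) _)) (hnn _)

lemma lint_shift (g : ℝ → ℝ≥0∞) (hg : Measurable g) (c : ℝ) {S : Set ℝ} (hS : MeasurableSet S) :
    ∫⁻ x in (fun x => x + c) ⁻¹' S, g (x + c) = ∫⁻ y in S, g y :=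
  (measurePreserving_add_right volume c).setLIntegral_comp_preimage hS hg

lemma lint_reflect (g : ℝ → ℝ≥0∞) (hg : Measurable g) :
    ∫⁻ x in Ioi (0:ℝ), g (-x) = ∫⁻ y in Iio (0:ℝ), g y := by
  have := (Measure.measurePreserving_neg (volume : Measure ℝ)).setLIntegral_comp_preimage
    (measurableSet_Iio (a := (0:ℝ))) hg
  simpa [show (Neg.neg ⁻¹' Iio (0:ℝ)) = Ioi 0 from by ext x; simp] using this

lemma swap_triangle (f : ℝ → ℝ → ℝ≥0∞) (k : ℝ → ℝ≥0∞)
    (hf : Measurable (Function.uncurry f)) (hk : Measurable k) :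
    ∫⁻ s in Ioi (0:ℝ), ∫⁻ v in Ioi s, f s v * k v
      = ∫⁻ v in Ioi (0:ℝ), (∫⁻ s in Ioo 0 v, f s v) * k v := by
  have hR : MeasurableSet {p : ℝ × ℝ | 0 < p.1 ∧ p.1 < p.2} :=
    (measurableSet_lt measurable_const measurable_fst).inter
      (measurableSet_lt measurable_fst measurable_snd)
  set F : ℝ → ℝ → ℝ≥0∞ := fun s v =>
    ({p : ℝ × ℝ | 0 < p.1 ∧ p.1 < p.2}).indicator (fun p => f p.1 p.2 * k p.2) (s, v) with hFdef
  have hFmeas : Measurable (Function.uncurry F) :=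
    ((hf.mul (hk.comp measurable_snd)).indicator hR)
  have key1 : ∀ s : ℝ, ∫⁻ v, F s v =
      (Ioi (0:ℝ)).indicator (fun s => ∫⁻ v in Ioi s, f s v * k v) s := by
    intro s
    by_cases hs : s ∈ Ioi (0:ℝ)
    · rw [indicator_of_mem hs, ← lintegral_indicator measurableSet_Ioi]
      refine lintegral_congr fun v => ?_
      simp only [hFdef, indicator_apply, mem_setOf_eq, mem_Ioi]
      simp [hs.out]
    · rw [indicator_of_notMem hs]
      have : ∀ v, F s v = 0 := fun v =>
        indicator_of_notMem (by simp only [mem_setOf_eq]; intro hc; exact hs hc.1) _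
      simp [this]
  have key2 : ∀ v : ℝ, ∫⁻ s, F s v =
      (Ioi (0:ℝ)).indicator (fun v => (∫⁻ s in Ioo 0 v, f s v) * k v) v := by
    intro v
    have hfv : Measurable fun s => f s v := hf.comp (measurable_id.prodMk measurable_const)
    have e : ∀ s, F s v = (Ioo (0:ℝ) v).indicator (fun s => f s v * k v) s := by
      intro s
      simp only [hFdef, indicator_apply, mem_setOf_eq, mem_Ioo]
    by_cases hv : v ∈ Ioi (0:ℝ)
    · rw [indicator_of_mem hv]
      simp_rw [e]
      rw [lintegral_indicator measurableSet_Ioo, lintegral_mul_const _ hfv]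
    · rw [indicator_of_notMem hv]
      have hempty : Ioo (0:ℝ) v = ∅ := Ioo_eq_empty (by simpa using hv)
      simp_rw [e, hempty]
      simp
  calc ∫⁻ s in Ioi (0:ℝ), ∫⁻ v in Ioi s, f s v * k v
      = ∫⁻ s, (Ioi (0:ℝ)).indicator (fun s => ∫⁻ v in Ioi s, f s v * k v) s :=
        (lintegral_indicator measurableSet_Ioi _).symm
    _ = ∫⁻ s, ∫⁻ v, F s v := by simp_rw [key1]
    _ = ∫⁻ v, ∫⁻ s, F s v := lintegral_lintegral_swap hFmeas.aemeasurable
    _ = ∫⁻ v, (Ioi (0:ℝ)).indicator (fun v => (∫⁻ s in Ioo 0 v, f s v) * k v) v := by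
        simp_rw [key2]
    _ = _ := lintegral_indicator measurableSet_Ioi _

-- integral of s^n over Ioo 0 v in ENNReal form
lemma lint_pow_Ioo (v : ℝ) (hv : 0 < v) (n : ℕ) :
    ∫⁻ s in Ioo (0:ℝ) v, ENNReal.ofReal (s ^ n) = ENNReal.ofReal (v ^ (n+1) / (n+1)) := by
  have hcont : IntegrableOn (fun s : ℝ => s ^ n) (Ioo 0 v) volume :=
    ((continuous_pow n).integrableOn_Icc (a := (0:ℝ)) (b := v)).mono_set Ioo_subset_Icc_self
  rw [← ofReal_integral_eq_lintegral_ofReal hcont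
    ((ae_restrict_iff' measurableSet_Ioo).2 (ae_of_all _ fun s hs => pow_nonneg hs.1.le n))]
  congr 1
  rw [show (Ioo (0:ℝ) v) = Set.Ioo 0 v from rfl]
  rw [← integral_Ioc_eq_integral_Ioo, ← intervalIntegral.integral_of_le hv.le,
    integral_pow]
  simp

theorem fourth_moment_le_of_even_logconcave (h : ℝ → ℝ)
    (hnn : ∀ t, 0 ≤ h t) (heven : ∀ t, h (-t) = h t)
    (hlc : ∀ x y t : ℝ, 0 ≤ t → t ≤ 1 →
      h x ^ t * h y ^ (1 - t) ≤ h (t * x + (1 - t) * y))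
    (hmeas : Measurable h) (hprob : ∫ t, h t = 1)
    (hint : Integrable (fun t => t ^ 4 * h t)) :
    ∫ t, t ^ 4 * h t ≤ 6 * (∫ t, t ^ 2 * h t) ^ 2 := by
  classical
  have hInt_h : Integrable h := integrable_of_integral_eq_one hprob
  have hint2 : Integrable (fun t => t ^ 2 * h t) := by
    refine (hInt_h.add hint).mono'
      (((measurable_id.pow_const 2).mul hmeas).aestronglyMeasurable)
      (ae_of_all _ fun t => ?_)
    have h1 : t ^ 2 ≤ 1 + t ^ 4 := by nlinarith [sq_nonneg (t ^ 2 - 1)]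
    have h2 := hnn t
    rw [Real.norm_eq_abs, abs_of_nonneg (mul_nonneg (sq_nonneg t) h2)]
    simp only [Pi.add_apply]
    nlinarith
  set H : ℝ → ℝ≥0∞ := fun t => ENNReal.ofReal (h t) with hHdef
  have hH : Measurable H := hmeas.ennreal_ofReal
  set Γ : ℝ → ℝ≥0∞ := fun t => ∫⁻ u in Ioi t, H u with hΓdef
  have hΓanti : Antitone Γ := fun s t hst => lintegral_mono_set (Ioi_subset_Ioi hst)
  have hΓ : Measurable Γ := hΓanti.measurable
  have m2H : Measurable fun v : ℝ => ENNReal.ofReal (v ^ 2 / 2) * H v :=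
    ((measurable_id.pow_const 2).div_const 2).ennreal_ofReal.mul hH
  have m4H : Measurable fun v : ℝ => ENNReal.ofReal (v ^ 4 / 4) * H v :=
    ((measurable_id.pow_const 4).div_const 4).ennreal_ofReal.mul hH
  have m36 : Measurable fun v : ℝ => ENNReal.ofReal (v ^ 3 / 6) * Γ v :=
    ((measurable_id.pow_const 3).div_const 6).ennreal_ofReal.mul hΓ
  have mu1 : Measurable (Function.uncurry fun (s v : ℝ) => ENNReal.ofReal s) :=
    ENNReal.measurable_ofReal.comp measurable_fst
  have mu3 : Measurable (Function.uncurry fun (s v : ℝ) => ENNReal.ofReal (s ^ 3)) :=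
    ENNReal.measurable_ofReal.comp (measurable_fst.pow_const 3)
  have am4 : AEStronglyMeasurable (fun t : ℝ => t ^ 4 * h t) volume :=
    ((measurable_id.pow_const 4).mul hmeas).aestronglyMeasurable
  have am2 : AEStronglyMeasurable (fun t : ℝ => t ^ 2 * h t) volume :=
    ((measurable_id.pow_const 2).mul hmeas).aestronglyMeasurable
  have mref : ∀ n : ℕ, Measurable fun t : ℝ => ENNReal.ofReal (t ^ n * h t) := fun n =>
    ((measurable_id.pow_const n).mul hmeas).ennreal_ofReal
  -- shifts
  have hshiftA : ∀ s t : ℝ, ∫⁻ b in Ioi (s + t), H (b - t) = Γ s := by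
    intro s t
    have := lint_shift H hH (-t) (measurableSet_Ioi (a := s))
    rw [preimage_add_const_Ioi] at this
    simp only [hΓdef]
    rw [show s - -t = s + t by ring] at this
    rw [← this]
    exact setLIntegral_congr_fun measurableSet_Ioi
      (fun x _ => by simp only [show x - t = x + -t by ring])
  have hshiftB : ∀ s t : ℝ, ∫⁻ a in Ioc (0:ℝ) s, H (a + t) = ∫⁻ x in Ioc t (s + t), H x := by
    intro s t
    have := lint_shift H hH t (measurableSet_Ioc (a := t) (b := s + t))
    rw [preimage_add_const_Ioc] at this
    rw [show t - t = (0:ℝ) by ring, show s + t - t = s by ring] at this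
    exact this
  -- total mass
  have htot : ∫⁻ t, H t = 1 := by
    rw [hHdef, ← ofReal_integral_eq_lintegral_ofReal hInt_h (ae_of_all _ hnn), hprob,
      ENNReal.ofReal_one]
  have hIci : ∫⁻ t in Ici (0:ℝ), H t = Γ 0 := (setLIntegral_congr Ioi_ae_eq_Ici).symm
  have hIio : ∫⁻ t in Iio (0:ℝ), H t = Γ 0 := by
    rw [← lint_reflect H hH]
    exact setLIntegral_congr_fun measurableSet_Ioi
      (fun x _ => by simp only [hHdef]; rw [heven])
  have hΓ0 : Γ 0 = 2⁻¹ := by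
    have hsplit : (∫⁻ t in Iio (0:ℝ), H t) + ∫⁻ t in Ici (0:ℝ), H t = 1 := by
      have hc := lintegral_add_compl (μ := volume) H (measurableSet_Iio (a := (0:ℝ)))
      rw [compl_Iio] at hc
      rw [hc, htot]
    rw [hIio, hIci, ← two_mul] at hsplit
    have h2 := congrArg (fun x => 2⁻¹ * x) hsplit
    try simp only at h2
    rw [← mul_assoc, ENNReal.inv_mul_cancel two_ne_zero ENNReal.ofNat_ne_top, one_mul] at h2
    rw [h2, mul_one]
  -- step inequality
  have step : ∀ s t a : ℝ, 0 ≤ t → a ≤ s → H a * Γ (s + t) ≤ H (a + t) * Γ s := by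
    intro s t a ht has
    have e1 : H a * Γ (s + t) = ∫⁻ b in Ioi (s + t), H a * H b := by
      rw [hΓdef]
      exact (lintegral_const_mul _ hH).symm
    have hmsub : Measurable (fun b : ℝ => H (b - t)) := hH.comp (measurable_id.sub_const t)
    have e2 : ∫⁻ b in Ioi (s + t), H (a + t) * H (b - t) = H (a + t) * Γ s := by
      rw [lintegral_const_mul _ hmsub]
      rw [hshiftA s t]
    rw [e1, ← e2]
    refine setLIntegral_mono (measurable_const.mul hmsub) fun b hb => ?_
    have hab : a + t ≤ b := le_trans (by linarith [has] : a + t ≤ s + t) (le_of_lt hb)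
    simp only [hHdef]
    rw [← ENNReal.ofReal_mul (hnn a), ← ENNReal.ofReal_mul (hnn (a + t))]
    exact ENNReal.ofReal_le_ofReal (key_pt h hnn hlc a b t ht hab)
  -- key tail inequality
  have hkey : ∀ s t : ℝ, 0 ≤ s → 0 ≤ t → 2⁻¹ * Γ (s + t) ≤ Γ s * Γ t := by
    intro s t hs ht
    have hsplitΓ0 : Γ 0 = (∫⁻ a in Ioc (0:ℝ) s, H a) + Γ s := by
      simp only [hΓdef]
      rw [← lintegral_union measurableSet_Ioi (Ioc_disjoint_Ioi le_rfl),
        Ioc_union_Ioi_eq_Ioi hs]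
    have hsplitΓt : (∫⁻ x in Ioc t (s + t), H x) + Γ (s + t) = Γ t := by
      simp only [hΓdef]
      rw [← lintegral_union measurableSet_Ioi (Ioc_disjoint_Ioi le_rfl),
        Ioc_union_Ioi_eq_Ioi (by linarith : t ≤ s + t)]
    calc 2⁻¹ * Γ (s + t) = Γ 0 * Γ (s + t) := by rw [hΓ0]
      _ = (∫⁻ a in Ioc (0:ℝ) s, H a) * Γ (s + t) + Γ s * Γ (s + t) := by
          rw [hsplitΓ0, add_mul]
      _ = (∫⁻ a in Ioc (0:ℝ) s, H a * Γ (s + t)) + Γ s * Γ (s + t) := by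
          rw [lintegral_mul_const _ hH]
      _ ≤ (∫⁻ a in Ioc (0:ℝ) s, H (a + t) * Γ s) + Γ s * Γ (s + t) := by
          have hmadd : Measurable (fun a : ℝ => H (a + t)) := hH.comp (measurable_id.add_const t)
          refine add_le_add_left (setLIntegral_mono
            (hmadd.mul measurable_const) fun a ha => ?_) _
          exact step s t a ht ha.2
      _ = (∫⁻ x in Ioc t (s + t), H x) * Γ s + Γ s * Γ (s + t) := by
          have hmadd : Measurable (fun a : ℝ => H (a + t)) := hH.comp (measurable_id.add_const t)
          rw [lintegral_mul_const _ hmadd, hshiftB s t]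
      _ = Γ s * Γ t := by rw [mul_comm _ (Γ s), ← mul_add, hsplitΓt]
  -- shift for the double integral
  have hshiftC : ∀ s : ℝ, ∫⁻ t in Ioi (0:ℝ), ENNReal.ofReal t * Γ (s + t)
      = ∫⁻ v in Ioi s, ENNReal.ofReal (v - s) * Γ v := by
    intro s
    have hg : Measurable fun v : ℝ => ENNReal.ofReal (v - s) * Γ v :=
      ((measurable_id.sub_const s).ennreal_ofReal).mul hΓ
    have hsh := lint_shift _ hg s (measurableSet_Ioi (a := s))
    rw [preimage_add_const_Ioi, sub_self] at hsh
    rw [← hsh]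
    refine setLIntegral_congr_fun measurableSet_Ioi (fun x _ => ?_)
    rw [add_sub_cancel_right, add_comm]
  -- one-sided moments
  set C1 := ∫⁻ s in Ioi (0:ℝ), ENNReal.ofReal s * Γ s with hC1def
  set C3 := ∫⁻ s in Ioi (0:ℝ), ENNReal.ofReal (s ^ 3) * Γ s with hC3def
  have hC1H : C1 = ∫⁻ v in Ioi (0:ℝ), ENNReal.ofReal (v ^ 2 / 2) * H v := by
    have e : ∀ s ∈ Ioi (0:ℝ), ENNReal.ofReal s * Γ s
        = ∫⁻ v in Ioi s, ENNReal.ofReal s * H v := by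
      intro s _
      simp only [hΓdef]
      exact (lintegral_const_mul _ hH).symm
    rw [hC1def, setLIntegral_congr_fun measurableSet_Ioi (e),
      swap_triangle _ _ mu1 hH]
    refine setLIntegral_congr_fun measurableSet_Ioi (fun v hv => ?_)
    congr 1
    have := lint_pow_Ioo v hv 1
    norm_num at this
    simpa using this
  have hC3H : C3 = ∫⁻ v in Ioi (0:ℝ), ENNReal.ofReal (v ^ 4 / 4) * H v := by
    have e : ∀ s ∈ Ioi (0:ℝ), ENNReal.ofReal (s ^ 3) * Γ s
        = ∫⁻ v in Ioi s, ENNReal.ofReal (s ^ 3) * H v := by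
      intro s _
      simp only [hΓdef]
      exact (lintegral_const_mul _ hH).symm
    rw [hC3def, setLIntegral_congr_fun measurableSet_Ioi (e),
      swap_triangle _ _ mu3 hH]
    refine setLIntegral_congr_fun measurableSet_Ioi (fun v hv => ?_)
    congr 1
    have := lint_pow_Ioo v hv 3
    norm_num at this
    simpa using this
  set M2 := ∫⁻ v in Ioi (0:ℝ), ENNReal.ofReal (v ^ 2 * h v) with hM2def
  set M4 := ∫⁻ v in Ioi (0:ℝ), ENNReal.ofReal (v ^ 4 * h v) with hM4def
  have hM2 : M2 = 2 * C1 := by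
    have e : M2 = ∫⁻ v in Ioi (0:ℝ), 2 * (ENNReal.ofReal (v ^ 2 / 2) * H v) := by
      rw [hM2def]
      refine setLIntegral_congr_fun measurableSet_Ioi (fun v hv => ?_)
      simp only [hHdef]
      rw [← ENNReal.ofReal_mul (by positivity : (0:ℝ) ≤ v ^ 2 / 2),
        show (2:ℝ≥0∞) = ENNReal.ofReal 2 by norm_num,
        ← ENNReal.ofReal_mul (by norm_num : (0:ℝ) ≤ 2)]
      congr 1; ring
    rw [e, lintegral_const_mul _ m2H, hC1H]
  have hM4 : M4 = 4 * C3 := by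
    have e : M4 = ∫⁻ v in Ioi (0:ℝ), 4 * (ENNReal.ofReal (v ^ 4 / 4) * H v) := by
      rw [hM4def]
      refine setLIntegral_congr_fun measurableSet_Ioi (fun v hv => ?_)
      simp only [hHdef]
      rw [← ENNReal.ofReal_mul (by positivity : (0:ℝ) ≤ v ^ 4 / 4),
        show (4:ℝ≥0∞) = ENNReal.ofReal 4 by norm_num,
        ← ENNReal.ofReal_mul (by norm_num : (0:ℝ) ≤ 4)]
      congr 1; ring
    rw [e, lintegral_const_mul _ m4H, hC3H]
  -- the double-integral comparison
  have hmeasC1fun : Measurable fun s : ℝ => ENNReal.ofReal s * Γ s :=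
    measurable_id.ennreal_ofReal.mul hΓ
  set D := ∫⁻ v in Ioi (0:ℝ), ENNReal.ofReal (v ^ 3 / 6) * Γ v with hDdef
  have hC3D : C3 = 6 * D := by
    rw [hDdef, ← lintegral_const_mul _ m36, hC3def]
    refine setLIntegral_congr_fun measurableSet_Ioi (fun v hv => ?_)
    rw [← mul_assoc]
    congr 1
    rw [show (6:ℝ≥0∞) = ENNReal.ofReal 6 by norm_num,
      ← ENNReal.ofReal_mul (by norm_num : (0:ℝ) ≤ 6)]
    congr 1; ring
  have hlow : 2⁻¹ * D ≤ C1 * C1 := by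
    have e0 : C1 * C1 = ∫⁻ s in Ioi (0:ℝ), ENNReal.ofReal s * Γ s * C1 := by
      rw [hC1def]
      exact (lintegral_mul_const _ hmeasC1fun).symm
    have inner : ∀ s ∈ Ioi (0:ℝ),
        2⁻¹ * ∫⁻ v in Ioi s, ENNReal.ofReal (s * (v - s)) * Γ v
          ≤ ENNReal.ofReal s * Γ s * C1 := by
      intro s hs
      have hs0 : (0:ℝ) ≤ s := le_of_lt hs
      have e1 : Γ s * C1 = ∫⁻ t in Ioi (0:ℝ), Γ s * (ENNReal.ofReal t * Γ t) := by
        rw [hC1def]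
        exact (lintegral_const_mul _ hmeasC1fun).symm
      have mono : ∫⁻ t in Ioi (0:ℝ), 2⁻¹ * (ENNReal.ofReal t * Γ (s + t))
          ≤ ∫⁻ t in Ioi (0:ℝ), Γ s * (ENNReal.ofReal t * Γ t) := by
        refine setLIntegral_mono (measurable_const.mul hmeasC1fun) fun t ht => ?_
        rw [show Γ s * (ENNReal.ofReal t * Γ t) = ENNReal.ofReal t * (Γ s * Γ t) by ring,
          show 2⁻¹ * (ENNReal.ofReal t * Γ (s + t))
            = ENNReal.ofReal t * (2⁻¹ * Γ (s + t)) by ring]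
        exact mul_le_mul_right (hkey s t hs0 (le_of_lt ht)) _
      have hmst : Measurable fun t : ℝ => ENNReal.ofReal t * Γ (s + t) :=
        measurable_id.ennreal_ofReal.mul (hΓ.comp (measurable_id.const_add s))
      rw [lintegral_const_mul _ hmst, hshiftC s, ← e1] at mono
      have msub : Measurable fun v : ℝ => ENNReal.ofReal (v - s) * Γ v :=
        ((measurable_id.sub_const s).ennreal_ofReal).mul hΓ
      have e2 : ∫⁻ v in Ioi s, ENNReal.ofReal (s * (v - s)) * Γ v
          = ENNReal.ofReal s * ∫⁻ v in Ioi s, ENNReal.ofReal (v - s) * Γ v := by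
        rw [← lintegral_const_mul _ msub]
        refine setLIntegral_congr_fun measurableSet_Ioi (fun v hv => ?_)
        rw [← mul_assoc, ← ENNReal.ofReal_mul hs0]
      rw [e2]
      calc 2⁻¹ * (ENNReal.ofReal s * ∫⁻ v in Ioi s, ENNReal.ofReal (v - s) * Γ v)
          = ENNReal.ofReal s * (2⁻¹ * ∫⁻ v in Ioi s, ENNReal.ofReal (v - s) * Γ v) := by
            ring
        _ ≤ ENNReal.ofReal s * (Γ s * C1) := mul_le_mul_right mono _
        _ = ENNReal.ofReal s * Γ s * C1 := by ring
    have swap2 : ∫⁻ s in Ioi (0:ℝ), ∫⁻ v in Ioi s, ENNReal.ofReal (s * (v - s)) * Γ v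
        = ∫⁻ v in Ioi (0:ℝ), (∫⁻ s in Ioo 0 v, ENNReal.ofReal (s * (v - s))) * Γ v :=
      swap_triangle _ _ ((measurable_fst.mul (measurable_snd.sub measurable_fst)).ennreal_ofReal)
        hΓ
    have hD2 : ∫⁻ v in Ioi (0:ℝ), (∫⁻ s in Ioo 0 v, ENNReal.ofReal (s * (v - s))) * Γ v = D := by
      rw [hDdef]
      refine setLIntegral_congr_fun measurableSet_Ioi (fun v hv => ?_)
      congr 1
      have hcont : IntegrableOn (fun s : ℝ => s * (v - s)) (Ioo 0 v) volume :=
        ((continuous_id.mul (continuous_const.sub continuous_id)).integrableOn_Icc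
          (a := (0:ℝ)) (b := v)).mono_set Ioo_subset_Icc_self
      rw [← ofReal_integral_eq_lintegral_ofReal hcont
        ((ae_restrict_iff' measurableSet_Ioo).2 (ae_of_all _ fun s hs =>
          mul_nonneg hs.1.le (by linarith [hs.2])))]
      congr 1
      rw [← integral_Ioc_eq_integral_Ioo, ← intervalIntegral.integral_of_le (le_of_lt hv)]
      rw [intervalIntegral.integral_congr (g := fun s : ℝ => s * v - s ^ 2)
        (fun s _ => by ring)]
      have i1 : IntervalIntegrable (fun x : ℝ => x * v) volume 0 v :=
        (continuous_id.mul continuous_const).intervalIntegrable _ _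
      have i2 : IntervalIntegrable (fun x : ℝ => x ^ 2) volume 0 v :=
        (continuous_pow 2).intervalIntegrable _ _
      rw [intervalIntegral.integral_sub i1 i2]
      simp [intervalIntegral.integral_mul_const, integral_id, integral_pow]
      ring
    calc 2⁻¹ * D
        = ∫⁻ s in Ioi (0:ℝ), 2⁻¹ * ∫⁻ v in Ioi s, ENNReal.ofReal (s * (v - s)) * Γ v := by
          rw [← hD2, ← swap2, ← lintegral_const_mul' _ _ (by norm_num : (2⁻¹:ℝ≥0∞) ≠ ⊤)]
      _ ≤ ∫⁻ s in Ioi (0:ℝ), ENNReal.ofReal s * Γ s * C1 :=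
          setLIntegral_mono' measurableSet_Ioi inner
      _ = C1 * C1 := e0.symm
  have hdbl : C3 ≤ 12 * (C1 * C1) := by
    have hD : D ≤ 2 * (C1 * C1) := by
      have := mul_le_mul_right hlow (2 : ℝ≥0∞)
      rwa [← mul_assoc, ENNReal.mul_inv_cancel two_ne_zero ENNReal.ofNat_ne_top, one_mul] at this
    calc C3 = 6 * D := hC3D
      _ ≤ 6 * (2 * (C1 * C1)) := mul_le_mul_right hD _
      _ = 12 * (C1 * C1) := by ring
  -- two-sided moments
  set T2 := ∫⁻ t : ℝ, ENNReal.ofReal (t ^ 2 * h t) with hT2def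
  set T4 := ∫⁻ t : ℝ, ENNReal.ofReal (t ^ 4 * h t) with hT4def
  have hrefl : ∀ n : ℕ, Even n → (∫⁻ t in Iio (0:ℝ), ENNReal.ofReal (t ^ n * h t))
      = ∫⁻ t in Ioi (0:ℝ), ENNReal.ofReal (t ^ n * h t) := by
    intro n hn
    rw [← lint_reflect _ (mref n)]
    refine setLIntegral_congr_fun measurableSet_Ioi (fun x _ => ?_)
    rw [heven, hn.neg_pow]
  have hT2split : T2 = 2 * M2 := by
    have hc := lintegral_add_compl (μ := volume) (fun t => ENNReal.ofReal (t ^ 2 * h t))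
      (measurableSet_Iio (a := (0:ℝ)))
    rw [compl_Iio] at hc
    try simp only at hc
    rw [hT2def, ← hc, hrefl 2 (by decide),
      ← setLIntegral_congr (μ := volume) (f := fun t => ENNReal.ofReal (t ^ 2 * h t))
        (Ioi_ae_eq_Ici (a := (0:ℝ))), hM2def, two_mul]
  have hT4split : T4 = 2 * M4 := by
    have hc := lintegral_add_compl (μ := volume) (fun t => ENNReal.ofReal (t ^ 4 * h t))
      (measurableSet_Iio (a := (0:ℝ)))
    rw [compl_Iio] at hc
    try simp only at hc
    rw [hT4def, ← hc, hrefl 4 (by decide),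
      ← setLIntegral_congr (μ := volume) (f := fun t => ENNReal.ofReal (t ^ 4 * h t))
        (Ioi_ae_eq_Ici (a := (0:ℝ))), hM4def, two_mul]
  have final_ennreal : T4 ≤ 6 * T2 ^ 2 := by
    rw [hT4split, hT2split, hM4, hM2]
    calc 2 * (4 * C3) ≤ 2 * (4 * (12 * (C1 * C1))) := by
          exact mul_le_mul_right (mul_le_mul_right hdbl _) _
      _ = 6 * (2 * (2 * C1)) ^ 2 := by ring
  -- finiteness
  have hT4ne : T4 ≠ ⊤ := by
    rw [hT4def]
    exact ((hasFiniteIntegral_iff_ofReal (ae_of_all _ fun t =>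
      mul_nonneg (by positivity) (hnn t))).1 hint.hasFiniteIntegral).ne
  have hT2ne : T2 ≠ ⊤ := by
    rw [hT2def]
    exact ((hasFiniteIntegral_iff_ofReal (ae_of_all _ fun t =>
      mul_nonneg (by positivity) (hnn t))).1 hint2.hasFiniteIntegral).ne
  -- back to Bochner integrals
  have hgoal4 : ∫ t, t ^ 4 * h t = T4.toReal := by
    rw [hT4def, integral_eq_lintegral_of_nonneg_ae
      (ae_of_all _ fun t => mul_nonneg (by positivity) (hnn t))
      am4]
  have hgoal2 : ∫ t, t ^ 2 * h t = T2.toReal := by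
    rw [hT2def, integral_eq_lintegral_of_nonneg_ae
      (ae_of_all _ fun t => mul_nonneg (by positivity) (hnn t))
      am2]
  rw [hgoal4, hgoal2]
  have hfin : (6 : ℝ≥0∞) * T2 ^ 2 ≠ ⊤ :=
    ENNReal.mul_ne_top (by norm_num) (ENNReal.pow_ne_top hT2ne)
  calc T4.toReal ≤ (6 * T2 ^ 2).toReal :=
        (ENNReal.toReal_le_toReal hT4ne hfin).2 final_ennreal
    _ = 6 * T2.toReal ^ 2 := by
        rw [ENNReal.toReal_mul, ENNReal.toReal_pow]
        norm_num
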